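/- Let G be a profinite group, H ⊆ G a closed normal subgroup, E a finite extension of ℚ_ℓ, and ρ, ρ': G → GL_r(E) continuous representations with ρ|_H = ρ'|_H absolutely simple, inducing the same projective representation G → PGL_r(E), and both with finite-order determinant. Then there exists an open subgroup G' ⊆ G containing H with ρ|_{G'} = ρ'|_{G'}. -/

import Mathlib

/-- Two continuous representations of a profinite group `G` over a finite extension `E`
of `ℚ_ℓ` which agree on a closed normal subgroup `H`, are absolutely simple on `H`
(Burnside: the image of `H` spans the matrix algebra), induce the same projective
representation, and have finite-order determinants, agree on an open subgroup of `G`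
containing `H`. -/
theorem continuous_reps_eq_on_open_subgroup
    (ℓ : ℕ) [Fact ℓ.Prime] {E : Type*} [NormedField E] [Algebra ℚ_[ℓ] E]
    [FiniteDimensional ℚ_[ℓ] E]
    {G : Type*} [Group G] [TopologicalSpace G] [IsTopologicalGroup G]
    [CompactSpace G] [T2Space G] [TotallyDisconnectedSpace G]
    (H : Subgroup G) (hH : H.Normal) (hHcl : IsClosed (H : Set G))
    {r : ℕ} (ρ ρ' : G →* GL (Fin r) E)
    (hρc : Continuous ρ) (hρ'c : Continuous ρ')
    (hagree : ∀ h ∈ H, ρ h = ρ' h)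
    (hsimple : Submodule.span E
      {M : Matrix (Fin r) (Fin r) E | ∃ h ∈ H, (ρ h : Matrix (Fin r) (Fin r) E) = M}
        = ⊤)
    (hproj : ∀ g : G, ∃ c : E,
      (ρ' g : Matrix (Fin r) (Fin r) E) = c • (ρ g : Matrix (Fin r) (Fin r) E))
    (hdet : ∃ m : ℕ, 0 < m ∧ ∀ g : G, (Matrix.det (ρ g : Matrix (Fin r) (Fin r) E)) ^ m = 1)
    (hdet' : ∃ m : ℕ, 0 < m ∧ ∀ g : G, (Matrix.det (ρ' g : Matrix (Fin r) (Fin r) E)) ^ m = 1) :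
    ∃ G' : Subgroup G, IsOpen (G' : Set G) ∧ H ≤ G' ∧ ∀ g ∈ G', ρ g = ρ' g := by
  rcases Nat.eq_zero_or_pos r with hr | hr
  · subst hr
    exact ⟨⊤, isOpen_univ, le_top, fun g _ => Subsingleton.elim _ _⟩
  -- r > 0
  -- nonzero matrices
  have hne : ∀ u : GL (Fin r) E, (u : Matrix (Fin r) (Fin r) E) ≠ 0 := by
    intro u h0
    have h1 : (1 : Matrix (Fin r) (Fin r) E) = 0 := by
      rw [← u.inv_mul, h0, mul_zero]
    have h2 := congrFun (congrFun h1 ⟨0, hr⟩) ⟨0, hr⟩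
    simp [Matrix.one_apply_eq] at h2
  -- uniqueness of the scalar
  have huniq : ∀ (g : G) (c c' : E),
      c • (ρ g : Matrix (Fin r) (Fin r) E) = c' • (ρ g : Matrix (Fin r) (Fin r) E) →
        c = c' := by
    intro g c c' h
    obtain ⟨i, j, hij⟩ : ∃ i j, (ρ g : Matrix (Fin r) (Fin r) E) i j ≠ 0 := by
      by_contra hc
      push_neg at hc
      exact hne (ρ g) (by ext i j; simp [hc])
    have h2 : c * (ρ g : Matrix (Fin r) (Fin r) E) i j
        = c' * (ρ g : Matrix (Fin r) (Fin r) E) i j := by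
      simpa [Matrix.smul_apply, smul_eq_mul] using congrFun (congrFun h i) j
    exact mul_right_cancel₀ hij h2
  set τ : G → E := fun g => (hproj g).choose with hτdef
  have hτ : ∀ g : G, (ρ' g : Matrix (Fin r) (Fin r) E)
      = τ g • (ρ g : Matrix (Fin r) (Fin r) E) := fun g => (hproj g).choose_spec
  have hτ1 : τ 1 = 1 := by
    refine (huniq 1 (τ 1) 1 ?_).symm ▸ rfl
    rw [← hτ 1, map_one, map_one, one_smul]
  have hτmul : ∀ g h : G, τ (g * h) = τ g * τ h := by
    intro g h
    apply huniq (g * h)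
    rw [← hτ (g * h), map_mul, map_mul, Units.val_mul, hτ g, hτ h,
      Matrix.smul_mul, Matrix.mul_smul, smul_smul, Units.val_mul]
  have hτne : ∀ g : G, τ g ≠ 0 := by
    intro g h0
    apply hne (ρ' g)
    rw [hτ g, h0, zero_smul]
  -- the homomorphism to units
  let φ : G →* Eˣ :=
  { toFun := fun g => Units.mk0 (τ g) (hτne g)
    map_one' := Units.ext (by simp [hτ1])
    map_mul' := fun g h => Units.ext (by simp [hτmul g h]) }
  have hφval : ∀ g : G, (φ g : E) = τ g := fun g => rfl
  obtain ⟨m, hm, hdm⟩ := hdet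
  obtain ⟨m', hm', hdm'⟩ := hdet'
  set N : ℕ := r * m * m' with hNdef
  have hN : 0 < N := by positivity
  haveI : NeZero N := ⟨hN.ne'⟩
  have hpow : ∀ g : G, τ g ^ N = 1 := by
    intro g
    have hd : Matrix.det (ρ' g : Matrix (Fin r) (Fin r) E)
        = τ g ^ r * Matrix.det (ρ g : Matrix (Fin r) (Fin r) E) := by
      rw [hτ g, Matrix.det_smul, Fintype.card_fin]
    have hb : (Matrix.det (ρ g : Matrix (Fin r) (Fin r) E)) ^ (m * m') = 1 := by
      rw [pow_mul, hdm g, one_pow]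
    have ha : (Matrix.det (ρ' g : Matrix (Fin r) (Fin r) E)) ^ (m * m') = 1 := by
      rw [mul_comm m m', pow_mul, hdm' g, one_pow]
    have : (τ g ^ r) ^ (m * m') = 1 := by
      have := ha
      rw [hd, mul_pow, hb, mul_one] at this
      exact this
    calc τ g ^ N = (τ g ^ r) ^ (m * m') := by rw [← pow_mul, hNdef, mul_assoc]
    _ = 1 := this
  -- the range of φ lands in the N-th roots of unity, hence the kernel has finite index
  have hsub : (φ.range : Set Eˣ) ⊆ ((rootsOfUnity N E : Subgroup Eˣ) : Set Eˣ) := by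
    rintro x ⟨g, rfl⟩
    rw [SetLike.mem_coe, mem_rootsOfUnity]
    exact Units.ext (by simp [Units.val_pow_eq_pow_val, hφval, hpow g])
  haveI : Finite (rootsOfUnity N E) := inferInstance
  have hfin : ((rootsOfUnity N E : Subgroup Eˣ) : Set Eˣ).Finite :=
    Set.finite_coe_iff.mp ‹Finite (rootsOfUnity N E)›
  haveI : Finite (φ.range : Set Eˣ) :=
    Set.Finite.to_subtype (Set.Finite.subset hfin hsub)
  haveI : Nonempty φ.range := ⟨1⟩
  haveI : φ.ker.FiniteIndex := ⟨by rw [Subgroup.index_ker]; exact Nat.card_pos.ne'⟩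
  -- the kernel of φ is exactly the locus where ρ = ρ'
  have hker : (φ.ker : Set G) = {g | ρ g = ρ' g} := by
    ext g
    simp only [SetLike.mem_coe, MonoidHom.mem_ker, Set.mem_setOf_eq]
    constructor
    · intro h
      have h1 : τ g = 1 := by
        have := congrArg Units.val h
        simpa [hφval] using this
      apply Units.ext
      rw [show ((ρ' g : GL (Fin r) E) : Matrix (Fin r) (Fin r) E)
        = τ g • (ρ g : Matrix (Fin r) (Fin r) E) from hτ g, h1, one_smul]
    · intro h
      have h1 : τ g = 1 := by
        apply huniq g
        rw [← hτ g, h, one_smul]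
      exact Units.ext (by simp [hφval, h1])
  -- T2 on GL
  haveI : T2Space (GL (Fin r) E) := Units.isEmbedding_embedProduct.t2Space
  have hclosed : IsClosed (φ.ker : Set G) := by
    rw [hker]
    exact isClosed_eq hρc hρ'c
  refine ⟨φ.ker, Subgroup.isOpen_of_isClosed_of_finiteIndex _ hclosed, ?_, ?_⟩
  · intro h hh
    have : h ∈ (φ.ker : Set G) := by rw [hker]; exact hagree h hh
    exact this
  · intro g hg
    have : g ∈ (φ.ker : Set G) := hg
    rw [hker] at this
    exact this
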